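/- Let X and Y be compact subsets of ℝ^d, let μ be a Borel probability measure on X, and let T : X → Y be continuous. For each k, let π_k be a finitely supported probability measure on X × Y whose support projects to a finite set X_k ⊆ X, and write μ_k for the first marginal of π_k. Define the barycentric projection of π_k as the finitely supported measure π̄_k = Σ_{x ∈ X_k} μ_k({x}) δ_{(x, ȳ_k(x))}, where for each x ∈ X_k with μ_k({x}) > 0, ȳ_k(x) = (1/μ_k({x})) Σ_{y : (x,y) ∈ supp π_k} π_k({(x,y)}) · y is the weighted Euclidean barycenter of the targets of x under π_k. If π_k converges weakly to the measure (id, T)_* μ (the pushforward of μ under x ↦ (x, T(x))), then π̄_k also converges weakly to (id, T)_* μ; in particular, the second marginal of π̄_k converges weakly to the pushforward measure T_* μ. -/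

import Mathlib

open MeasureTheory Filter Topology Finset

noncomputable section

/-- Weak convergence of a sequence of measures: the integrals of every bounded
continuous function converge. -/
def WeakConvSeq {α : Type*} [MeasurableSpace α] [TopologicalSpace α]
    (μs : ℕ → Measure α) (μ : Measure α) : Prop :=
  ∀ f : BoundedContinuousFunction α ℝ,
    Tendsto (fun k => ∫ x, f x ∂(μs k)) atTop (𝓝 (∫ x, f x ∂μ))

/-- The finitely supported measure `Σ_{q ∈ S} w(q) δ_q` on `ℝ^d × ℝ^d`
determined by a finite set `S` of points with weights `w`. -/
def discretePlanMeasure {d : ℕ} (S : Finset ((Fin d → ℝ) × (Fin d → ℝ)))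
    (w : (Fin d → ℝ) × (Fin d → ℝ) → NNReal) : Measure ((Fin d → ℝ) × (Fin d → ℝ)) :=
  ∑ q ∈ S, ((w q : ENNReal) • Measure.dirac q)

/-- The mass `μ({x})` that the first marginal of the discrete plan gives to the
point `x`. -/
def atomMass {d : ℕ} (S : Finset ((Fin d → ℝ) × (Fin d → ℝ)))
    (w : (Fin d → ℝ) × (Fin d → ℝ) → NNReal) (x : Fin d → ℝ) : NNReal :=
  ∑ q ∈ S.filter (fun q => q.1 = x), w q

/-- The weighted Euclidean barycenter `ȳ(x)` of the targets of the point `x`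
under the discrete plan `(S, w)`:
`ȳ(x) = (Σ_{y : (x,y) ∈ S} w(x,y) · y) / μ({x})`. -/
def baryTarget {d : ℕ} (S : Finset ((Fin d → ℝ) × (Fin d → ℝ)))
    (w : (Fin d → ℝ) × (Fin d → ℝ) → NNReal) (x : Fin d → ℝ) : Fin d → ℝ :=
  ((atomMass S w x : ℝ))⁻¹ • ∑ q ∈ S.filter (fun q => q.1 = x), (w q : ℝ) • q.2

/-- The barycentric projection `π̄ = Σ_x μ({x}) δ_{(x, ȳ(x))}` of the discrete
plan `(S, w)`, where `x` ranges over the projection of the support onto the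
first factor. -/
def baryProjection {d : ℕ} (S : Finset ((Fin d → ℝ) × (Fin d → ℝ)))
    (w : (Fin d → ℝ) × (Fin d → ℝ) → NNReal) : Measure ((Fin d → ℝ) × (Fin d → ℝ)) :=
  ∑ x ∈ S.image Prod.fst, ((atomMass S w x : ENNReal) • Measure.dirac (x, baryTarget S w x))


lemma integrable_wdirac {α : Type*} [MeasurableSpace α] [MeasurableSingletonClass α]
    (f : α → ℝ) (hf : StronglyMeasurable f) (c : NNReal) (a : α) :
    Integrable f ((c : ENNReal) • Measure.dirac a) := by
  have h : Integrable f (Measure.dirac a) := by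
    refine ⟨hf.aestronglyMeasurable, ?_⟩
    simp [HasFiniteIntegral, lintegral_dirac]
  exact h.smul_measure ENNReal.coe_ne_top

lemma integral_wdirac_sum {ι α : Type*} [MeasurableSpace α] [MeasurableSingletonClass α]
    (s : Finset ι) (c : ι → NNReal) (a : ι → α) (f : α → ℝ) (hf : StronglyMeasurable f) :
    ∫ x, f x ∂(∑ i ∈ s, ((c i : ENNReal) • Measure.dirac (a i)))
      = ∑ i ∈ s, (c i : ℝ) * f (a i) := by
  rw [integral_finset_sum_measure (fun i _ => integrable_wdirac f hf _ _)]
  refine Finset.sum_congr rfl fun i _ => ?_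
  rw [integral_smul_measure, integral_dirac]
  simp [smul_eq_mul]

lemma baryTarget_eq_centerMass {d : ℕ} (S : Finset ((Fin d → ℝ) × (Fin d → ℝ)))
    (w : (Fin d → ℝ) × (Fin d → ℝ) → NNReal) (x : Fin d → ℝ) :
    baryTarget S w x
      = (S.filter (fun q => q.1 = x)).centerMass (fun q => (w q : ℝ)) Prod.snd := by
  simp [baryTarget, Finset.centerMass, atomMass, NNReal.coe_sum]

lemma bary_dist_le {d : ℕ} (S : Finset ((Fin d → ℝ) × (Fin d → ℝ)))
    (w : (Fin d → ℝ) × (Fin d → ℝ) → NNReal) (x : Fin d → ℝ) (c : Fin d → ℝ) :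
    (atomMass S w x : ℝ) * dist (baryTarget S w x) c
      ≤ ∑ q ∈ S.filter (fun q => q.1 = x), (w q : ℝ) * dist q.2 c := by
  set F := S.filter (fun q => q.1 = x) with hF
  have hm : (atomMass S w x : ℝ) = ∑ q ∈ F, (w q : ℝ) := by
    simp [atomMass, NNReal.coe_sum, hF]
  rcases eq_or_lt_of_le (NNReal.coe_nonneg (atomMass S w x)) with h0 | hpos
  · rw [← h0, zero_mul]
    exact Finset.sum_nonneg fun q _ => mul_nonneg (w q).coe_nonneg dist_nonneg
  · have hm0 : (atomMass S w x : ℝ) ≠ 0 := ne_of_gt hpos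
    rw [dist_eq_norm]
    have hb : baryTarget S w x - c
        = ((atomMass S w x : ℝ))⁻¹ • (∑ q ∈ F, (w q : ℝ) • (q.2 - c)) := by
      have h1 : ∑ q ∈ F, (w q : ℝ) • (q.2 - c)
          = (∑ q ∈ F, (w q : ℝ) • q.2) - (atomMass S w x : ℝ) • c := by
        simp only [smul_sub]
        rw [Finset.sum_sub_distrib, ← Finset.sum_smul, ← hm]
      rw [h1, smul_sub, inv_smul_smul₀ hm0]
      rfl
    rw [hb, norm_smul, norm_inv, Real.norm_eq_abs, abs_of_pos hpos,
      mul_inv_cancel_left₀ hm0]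
    calc ‖∑ q ∈ F, (w q : ℝ) • (q.2 - c)‖ ≤ ∑ q ∈ F, ‖(w q : ℝ) • (q.2 - c)‖ :=
          norm_sum_le _ _
      _ = ∑ q ∈ F, (w q : ℝ) * dist q.2 c := by
          refine Finset.sum_congr rfl fun q _ => ?_
          rw [norm_smul, Real.norm_eq_abs, abs_of_nonneg (w q).coe_nonneg, dist_eq_norm]

/-- Convergence of barycentric projections: if the finitely supported plans
`π_k = discretePlanMeasure (S k) (w k)`, supported in `X × Y`, converge weakly
to `(id, T)_* μ` for a continuous `T : X → Y` and a Borel probability measure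
`μ` on the compact set `X`, then the barycentric projections `π̄_k` also
converge weakly to `(id, T)_* μ`; in particular their second marginals converge
weakly to `T_* μ`. -/
theorem baryProjection_weak_convergence
    {d : ℕ} (X Y : Set (Fin d → ℝ)) (hX : IsCompact X) (hY : IsCompact Y)
    (μ : Measure X) (hμ : IsProbabilityMeasure μ)
    (T : X → (Fin d → ℝ)) (hT : Continuous T) (hTY : ∀ x : X, T x ∈ Y)
    (S : ℕ → Finset ((Fin d → ℝ) × (Fin d → ℝ)))
    (w : ℕ → (Fin d → ℝ) × (Fin d → ℝ) → NNReal)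
    (hS : ∀ k, ∀ q ∈ S k, q ∈ X ×ˢ Y)
    (hw1 : ∀ k, ∑ q ∈ S k, w k q = 1)
    (hconv : WeakConvSeq (fun k => discretePlanMeasure (S k) (w k))
      (μ.map (fun x : X => ((x : Fin d → ℝ), T x)))) :
    WeakConvSeq (fun k => baryProjection (S k) (w k))
        (μ.map (fun x : X => ((x : Fin d → ℝ), T x))) ∧
      WeakConvSeq (fun k => (baryProjection (S k) (w k)).map Prod.snd)
        (μ.map T) := by
  classical
  set ν := μ.map (fun x : X => ((x : Fin d → ℝ), T x)) with hν
  -- Tietze extension of T to all of ℝ^d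
  obtain ⟨g, hg⟩ := ContinuousMap.exists_restrict_eq (Y := Fin d → ℝ) hX.isClosed ⟨T, hT⟩
  have hgT : ∀ x : X, g (x : Fin d → ℝ) = T x := fun x => ContinuousMap.congr_fun hg x
  -- the map φ defining ν is continuous
  have hφc : Continuous (fun x : X => ((x : Fin d → ℝ), T x)) :=
    continuous_subtype_val.prodMk hT
  -- bound M for dist(y, g x) on X × Y
  have hc : Continuous (fun p : (Fin d → ℝ) × (Fin d → ℝ) => dist p.2 (g p.1)) :=
    continuous_snd.dist (g.continuous.comp continuous_fst)
  obtain ⟨M0, hM0⟩ := (hX.prod hY).bddAbove_image hc.continuousOn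
  set M := max M0 0 with hM
  have hM_nonneg : (0 : ℝ) ≤ M := le_max_right _ _
  have hMb : ∀ p ∈ X ×ˢ Y, dist p.2 (g p.1) ≤ M := fun p hp =>
    le_trans (hM0 ⟨p, hp, rfl⟩) (le_max_left _ _)
  -- the bounded continuous test function min(dist(y, g x), M)
  have hgbc : Continuous (fun p : (Fin d → ℝ) × (Fin d → ℝ) => min (dist p.2 (g p.1)) M) :=
    hc.min continuous_const
  set gb : BoundedContinuousFunction ((Fin d → ℝ) × (Fin d → ℝ)) ℝ :=
    BoundedContinuousFunction.ofNormedAddCommGroup _ hgbc M (fun p => by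
      rw [Real.norm_eq_abs, abs_of_nonneg (le_min dist_nonneg hM_nonneg)]
      exact min_le_right _ _) with hgb
  have hgb_apply : ∀ p, gb p = min (dist p.2 (g p.1)) M := fun p => rfl
  -- b k = ∫ gb dπ_k, and b k → 0
  set b : ℕ → ℝ := fun k => ∑ q ∈ S k, (w k q : ℝ) * dist q.2 (g q.1) with hbdef
  have hb_nonneg : ∀ k, 0 ≤ b k := fun k =>
    Finset.sum_nonneg fun q _ => mul_nonneg (w k q).coe_nonneg dist_nonneg
  have hbk : ∀ k, ∫ p, gb p ∂(discretePlanMeasure (S k) (w k)) = b k := by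
    intro k
    rw [discretePlanMeasure, integral_wdirac_sum _ _ _ _ gb.continuous.stronglyMeasurable]
    refine Finset.sum_congr rfl fun q hq => ?_
    rw [hgb_apply, min_eq_left (hMb q (hS k q hq))]
  have hb0 : Tendsto b atTop (𝓝 0) := by
    have h1 := hconv gb
    have h2 : ∫ p, gb p ∂ν = 0 := by
      rw [hν, integral_map hφc.aemeasurable gb.continuous.aestronglyMeasurable]
      have : ∀ x : X, gb ((x : Fin d → ℝ), T x) = 0 := by
        intro x
        rw [hgb_apply]
        simp [hgT x, hM_nonneg]
      simp [this]
    rw [h2] at h1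
    exact Tendsto.congr (fun k => hbk k) h1
  -- key convergence for a fixed bounded continuous function
  have key : ∀ f : BoundedContinuousFunction ((Fin d → ℝ) × (Fin d → ℝ)) ℝ,
      Tendsto (fun k => ∫ p, f p ∂(baryProjection (S k) (w k))) atTop (𝓝 (∫ p, f p ∂ν)) := by
    intro f
    set m : ℕ → (Fin d → ℝ) → ℝ := fun k x => ((atomMass (S k) (w k) x : ℝ)) with hmdef
    have hm_nonneg : ∀ k x, 0 ≤ m k x := fun k x => NNReal.coe_nonneg _
    have hA : ∀ k, ∫ p, f p ∂(baryProjection (S k) (w k))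
        = ∑ x ∈ (S k).image Prod.fst, m k x * f (x, baryTarget (S k) (w k) x) := by
      intro k
      rw [baryProjection, integral_wdirac_sum _ _ _ _ f.continuous.stronglyMeasurable]
    -- the comparison function F p = f (p.1, g p.1)
    set F : BoundedContinuousFunction ((Fin d → ℝ) × (Fin d → ℝ)) ℝ :=
      f.compContinuous ⟨fun p => (p.1, g p.1),
        continuous_fst.prodMk (g.continuous.comp continuous_fst)⟩ with hFdef
    have hF_apply : ∀ p, F p = f (p.1, g p.1) := fun p => rfl
    have hB : ∀ k, ∫ p, F p ∂(discretePlanMeasure (S k) (w k))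
        = ∑ x ∈ (S k).image Prod.fst, m k x * f (x, g x) := by
      intro k
      rw [discretePlanMeasure, integral_wdirac_sum _ _ _ _ F.continuous.stronglyMeasurable]
      rw [← Finset.sum_fiberwise_of_maps_to (fun q hq => Finset.mem_image_of_mem Prod.fst hq)
        (fun q => (w k q : ℝ) * F q)]
      refine Finset.sum_congr rfl fun x hx => ?_
      have : ∀ q ∈ (S k).filter (fun q => q.1 = x), (w k q : ℝ) * F q
          = (w k q : ℝ) * f (x, g x) := by
        intro q hq
        have hq1 : q.1 = x := (Finset.mem_filter.mp hq).2
        rw [hF_apply, hq1]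
      rw [Finset.sum_congr rfl this, ← Finset.sum_mul]
      congr 1
      simp [hmdef, atomMass, NNReal.coe_sum]
    have hBlim : Tendsto (fun k => ∑ x ∈ (S k).image Prod.fst, m k x * f (x, g x)) atTop
        (𝓝 (∫ p, f p ∂ν)) := by
      have h1 := hconv F
      have h2 : ∫ p, F p ∂ν = ∫ p, f p ∂ν := by
        rw [hν, integral_map hφc.aemeasurable F.continuous.aestronglyMeasurable,
          integral_map hφc.aemeasurable f.continuous.aestronglyMeasurable]
        refine integral_congr_ae (Filter.Eventually.of_forall fun x => ?_)
        show F ((x : Fin d → ℝ), T x) = f ((x : Fin d → ℝ), T x)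
        rw [hF_apply]
        simp [hgT x]
      rw [h2] at h1
      exact Tendsto.congr (fun k => hB k) h1
    -- the compact set on which we use uniform continuity of f
    have hK2 : IsCompact (closure (convexHull ℝ Y) ∪ (g '' X)) := by
      refine IsCompact.union ?_ (hX.image g.continuous)
      refine Metric.isCompact_of_isClosed_isBounded isClosed_closure ?_
      exact (isBounded_convexHull.mpr hY.isBounded).closure
    have hK : IsCompact (X ×ˢ (closure (convexHull ℝ Y) ∪ (g '' X))) := hX.prod hK2
    have hUC := hK.uniformContinuousOn_of_continuous f.continuous.continuousOn
    rw [Metric.uniformContinuousOn_iff] at hUC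
    -- sum of the masses is 1
    have hsum1 : ∀ k, ∑ x ∈ (S k).image Prod.fst, m k x = 1 := by
      intro k
      have := Finset.sum_fiberwise_of_maps_to
        (fun q hq => Finset.mem_image_of_mem Prod.fst hq) (fun q => (w k q : ℝ))
        (s := S k) (t := (S k).image Prod.fst)
      calc ∑ x ∈ (S k).image Prod.fst, m k x
          = ∑ x ∈ (S k).image Prod.fst, ∑ q ∈ (S k).filter (fun q => q.1 = x), (w k q : ℝ) := by
            refine Finset.sum_congr rfl fun x _ => ?_
            simp [hmdef, atomMass, NNReal.coe_sum]
        _ = ∑ q ∈ S k, (w k q : ℝ) := this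
        _ = 1 := by rw [← NNReal.coe_sum, hw1 k, NNReal.coe_one]
    -- the weighted distance of barycenters to g is dominated by b k
    have hsum2 : ∀ k, ∑ x ∈ (S k).image Prod.fst,
        m k x * dist (baryTarget (S k) (w k) x) (g x) ≤ b k := by
      intro k
      calc ∑ x ∈ (S k).image Prod.fst, m k x * dist (baryTarget (S k) (w k) x) (g x)
          ≤ ∑ x ∈ (S k).image Prod.fst,
              ∑ q ∈ (S k).filter (fun q => q.1 = x), (w k q : ℝ) * dist q.2 (g x) :=
            Finset.sum_le_sum fun x _ => bary_dist_le (S k) (w k) x (g x)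
        _ = ∑ x ∈ (S k).image Prod.fst,
              ∑ q ∈ (S k).filter (fun q => q.1 = x), (w k q : ℝ) * dist q.2 (g q.1) := by
            refine Finset.sum_congr rfl fun x _ => Finset.sum_congr rfl fun q hq => ?_
            rw [(Finset.mem_filter.mp hq).2]
        _ = b k := Finset.sum_fiberwise_of_maps_to
            (fun q hq => Finset.mem_image_of_mem Prod.fst hq) _
    -- the difference tends to zero
    have hdiff : Tendsto (fun k =>
        (∑ x ∈ (S k).image Prod.fst, m k x * f (x, baryTarget (S k) (w k) x))
          - ∑ x ∈ (S k).image Prod.fst, m k x * f (x, g x)) atTop (𝓝 0) := by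
      rw [NormedAddCommGroup.tendsto_nhds_zero]
      intro ε hε
      obtain ⟨δ, hδ, hδf⟩ := hUC (ε / 2) (by positivity)
      set C := 2 * ‖f‖ / δ with hC
      have hC0 : (0 : ℝ) ≤ C := by positivity
      have hbC : Tendsto (fun k => C * b k) atTop (𝓝 0) := by
        simpa using hb0.const_mul C
      have hev : ∀ᶠ k in atTop, C * b k < ε / 2 :=
        hbC.eventually_lt_const (by positivity)
      filter_upwards [hev] with k hk
      -- termwise bound
      have hterm : ∀ x ∈ (S k).image Prod.fst,
          m k x * |f (x, baryTarget (S k) (w k) x) - f (x, g x)|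
            ≤ m k x * (ε / 2) + C * (m k x * dist (baryTarget (S k) (w k) x) (g x)) := by
        intro x hx
        rcases eq_or_lt_of_le (hm_nonneg k x) with h0 | hpos
        · rw [← h0]
          simp
        · have hxX : x ∈ X := by
            obtain ⟨q, hq, rfl⟩ := Finset.mem_image.mp hx
            exact (Set.mem_prod.mp (hS k q hq)).1
          have hbary : baryTarget (S k) (w k) x ∈ closure (convexHull ℝ Y) := by
            apply subset_closure
            rw [baryTarget_eq_centerMass]
            refine Finset.centerMass_mem_convexHull _ (fun q _ => (w k q).coe_nonneg) ?_
              (fun q hq => (Set.mem_prod.mp (hS k q (Finset.mem_filter.mp hq).1)).2)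
            have : (0 : ℝ) < m k x := hpos
            rw [hmdef] at this
            simpa [atomMass, NNReal.coe_sum] using this
          have hp : ((x, baryTarget (S k) (w k) x) : (Fin d → ℝ) × (Fin d → ℝ))
              ∈ X ×ˢ (closure (convexHull ℝ Y) ∪ (g '' X)) :=
            Set.mem_prod.mpr ⟨hxX, Or.inl hbary⟩
          have hq : ((x, g x) : (Fin d → ℝ) × (Fin d → ℝ))
              ∈ X ×ˢ (closure (convexHull ℝ Y) ∪ (g '' X)) :=
            Set.mem_prod.mpr ⟨hxX, Or.inr ⟨x, hxX, rfl⟩⟩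
          have hdist : dist ((x, baryTarget (S k) (w k) x) : (Fin d → ℝ) × (Fin d → ℝ))
              (x, g x) = dist (baryTarget (S k) (w k) x) (g x) := by
            rw [Prod.dist_eq]
            simp [max_eq_right dist_nonneg]
          by_cases hlt : dist (baryTarget (S k) (w k) x) (g x) < δ
          · have := hδf _ hp _ hq (by rw [hdist]; exact hlt)
            rw [Real.dist_eq] at this
            have h1 : m k x * |f (x, baryTarget (S k) (w k) x) - f (x, g x)|
                ≤ m k x * (ε / 2) :=
              mul_le_mul_of_nonneg_left this.le (hm_nonneg k x)
            refine h1.trans (le_add_of_nonneg_right ?_)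
            exact mul_nonneg hC0 (mul_nonneg (hm_nonneg k x) dist_nonneg)
          · push_neg at hlt
            have h2 : |f (x, baryTarget (S k) (w k) x) - f (x, g x)| ≤ 2 * ‖f‖ := by
              refine (abs_sub _ _).trans ?_
              have := f.norm_coe_le_norm (x, baryTarget (S k) (w k) x)
              have := f.norm_coe_le_norm (x, g x)
              rw [two_mul]
              exact add_le_add (f.norm_coe_le_norm _) (f.norm_coe_le_norm _)
            have h3 : (2 * ‖f‖ : ℝ) = C * δ := by
              rw [hC, div_mul_cancel₀ _ (ne_of_gt hδ)]
            have h4 : |f (x, baryTarget (S k) (w k) x) - f (x, g x)|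
                ≤ C * dist (baryTarget (S k) (w k) x) (g x) := by
              rw [h3] at h2
              exact h2.trans (mul_le_mul_of_nonneg_left hlt hC0)
            calc m k x * |f (x, baryTarget (S k) (w k) x) - f (x, g x)|
                ≤ m k x * (C * dist (baryTarget (S k) (w k) x) (g x)) :=
                  mul_le_mul_of_nonneg_left h4 (hm_nonneg k x)
              _ = C * (m k x * dist (baryTarget (S k) (w k) x) (g x)) := by ring
              _ ≤ m k x * (ε / 2) + C * (m k x * dist (baryTarget (S k) (w k) x) (g x)) := by
                  refine le_add_of_nonneg_left ?_
                  exact mul_nonneg (hm_nonneg k x) (by positivity)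
      calc ‖(∑ x ∈ (S k).image Prod.fst, m k x * f (x, baryTarget (S k) (w k) x))
            - ∑ x ∈ (S k).image Prod.fst, m k x * f (x, g x)‖
          = |∑ x ∈ (S k).image Prod.fst,
              (m k x * f (x, baryTarget (S k) (w k) x) - m k x * f (x, g x))| := by
            rw [Real.norm_eq_abs, Finset.sum_sub_distrib]
        _ ≤ ∑ x ∈ (S k).image Prod.fst,
              |m k x * f (x, baryTarget (S k) (w k) x) - m k x * f (x, g x)| :=
            Finset.abs_sum_le_sum_abs _ _
        _ = ∑ x ∈ (S k).image Prod.fst,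
              m k x * |f (x, baryTarget (S k) (w k) x) - f (x, g x)| := by
            refine Finset.sum_congr rfl fun x _ => ?_
            rw [← mul_sub, abs_mul, abs_of_nonneg (hm_nonneg k x)]
        _ ≤ ∑ x ∈ (S k).image Prod.fst,
              (m k x * (ε / 2) + C * (m k x * dist (baryTarget (S k) (w k) x) (g x))) :=
            Finset.sum_le_sum hterm
        _ = (∑ x ∈ (S k).image Prod.fst, m k x) * (ε / 2)
              + C * ∑ x ∈ (S k).image Prod.fst,
                  m k x * dist (baryTarget (S k) (w k) x) (g x) := by
            rw [Finset.sum_add_distrib, ← Finset.sum_mul, ← Finset.mul_sum]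
        _ ≤ 1 * (ε / 2) + C * b k := by
            refine add_le_add ?_ (mul_le_mul_of_nonneg_left (hsum2 k) hC0)
            rw [hsum1 k]
        _ < ε := by rw [one_mul]; linarith
    have : Tendsto (fun k =>
        ((∑ x ∈ (S k).image Prod.fst, m k x * f (x, baryTarget (S k) (w k) x))
          - ∑ x ∈ (S k).image Prod.fst, m k x * f (x, g x))
          + ∑ x ∈ (S k).image Prod.fst, m k x * f (x, g x)) atTop (𝓝 (0 + ∫ p, f p ∂ν)) :=
      hdiff.add hBlim
    rw [zero_add] at this
    refine Tendsto.congr (fun k => ?_) this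
    rw [hA k]
    ring
  refine ⟨key, ?_⟩
  intro f
  have h1 := key (f.compContinuous ⟨Prod.snd, continuous_snd⟩)
  have h2 : ∀ k, ∫ p, (f.compContinuous ⟨Prod.snd, continuous_snd⟩) p
      ∂(baryProjection (S k) (w k))
      = ∫ y, f y ∂((baryProjection (S k) (w k)).map Prod.snd) := by
    intro k
    rw [integral_map measurable_snd.aemeasurable f.continuous.aestronglyMeasurable]
    rfl
  have h3 : ∫ p, (f.compContinuous ⟨Prod.snd, continuous_snd⟩) p ∂ν = ∫ y, f y ∂(μ.map T) := by
    rw [hν, integral_map hφc.aemeasurable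
        (f.compContinuous ⟨Prod.snd, continuous_snd⟩).continuous.aestronglyMeasurable,
      integral_map hT.aemeasurable f.continuous.aestronglyMeasurable]
    rfl
  rw [h3] at h1
  exact Tendsto.congr (fun k => h2 k) h1
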